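/- Consider the 2D reflecting random walk with transition kernel P on ℤ₊² defined by bounded increments: from a state n in region A ∈ {∅,{1},{2},{1,2}} the chain jumps by a random increment X^A with law p^A supported on U^A. Fix θ = (θ1,θ2) with θ1 > 0, θ2 > 0 such that the moment generating functions satisfy γ^{{1}}(θ) < 1, γ^{{2}}(θ) < 1, γ^{E}(θ) < 1. Set c = 1 − max(γ^{{1}}(θ), γ^{{2}}(θ), γ^{E}(θ)) ∈ (0,1), v(n) = c⁻¹·exp(⟨θ,n⟩), and b = 1 + c⁻¹(γ^∅(θ) − 1). Then b > 0 and (Pv)(n) − v(n) ≤ −c·v(n) + b·1_{{(0,0)}}(n) for all n ∈ ℤ₊². -/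

import Mathlib

/-- Moment generating function of an increment distribution `p` supported on `U`. -/
noncomputable def mgf2 (p : ℤ × ℤ → ℝ) (U : Finset (ℤ × ℤ)) (θ1 θ2 : ℝ) : ℝ :=
  ∑ m ∈ U, p m * Real.exp (θ1 * (m.1 : ℝ) + θ2 * (m.2 : ℝ))

def U0 : Finset (ℤ × ℤ) := ({0, 1} : Finset ℤ) ×ˢ ({0, 1} : Finset ℤ)
def U1 : Finset (ℤ × ℤ) := ({-1, 0, 1} : Finset ℤ) ×ˢ ({0, 1} : Finset ℤ)
def U2 : Finset (ℤ × ℤ) := ({0, 1} : Finset ℤ) ×ˢ ({-1, 0, 1} : Finset ℤ)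
def UE : Finset (ℤ × ℤ) := ({-1, 0, 1} : Finset ℤ) ×ˢ ({-1, 0, 1} : Finset ℤ)

theorem stmt7 (p0 p1 p2 pE : ℤ × ℤ → ℝ)
    (h0nn : ∀ m, 0 ≤ p0 m) (h0sum : ∑ m ∈ U0, p0 m = 1)
    (h1nn : ∀ m, 0 ≤ p1 m) (h1sum : ∑ m ∈ U1, p1 m = 1)
    (h2nn : ∀ m, 0 ≤ p2 m) (h2sum : ∑ m ∈ U2, p2 m = 1)
    (hEnn : ∀ m, 0 ≤ pE m) (hEsum : ∑ m ∈ UE, pE m = 1)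
    (θ1 θ2 : ℝ) (hθ1 : 0 < θ1) (hθ2 : 0 < θ2)
    (hγ1 : mgf2 p1 U1 θ1 θ2 < 1) (hγ2 : mgf2 p2 U2 θ1 θ2 < 1)
    (hγE : mgf2 pE UE θ1 θ2 < 1)
    (c : ℝ)
    (hc : c = 1 - max (mgf2 p1 U1 θ1 θ2) (max (mgf2 p2 U2 θ1 θ2) (mgf2 pE UE θ1 θ2)))
    (v : ℤ × ℤ → ℝ) (hv : ∀ n : ℤ × ℤ, v n = c⁻¹ * Real.exp (θ1 * (n.1 : ℝ) + θ2 * (n.2 : ℝ)))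
    (b : ℝ) (hb : b = 1 + c⁻¹ * (mgf2 p0 U0 θ1 θ2 - 1)) :
    0 < b ∧ ∀ n : ℤ × ℤ, 0 ≤ n.1 → 0 ≤ n.2 →
      (if n = (0, 0) then ∑ m ∈ U0, p0 m * v (n + m)
       else if n.2 = 0 then ∑ m ∈ U1, p1 m * v (n + m)
       else if n.1 = 0 then ∑ m ∈ U2, p2 m * v (n + m)
       else ∑ m ∈ UE, pE m * v (n + m)) - v n
      ≤ -c * v n + b * (if n = (0, 0) then 1 else 0) := by

  have hcpos : 0 < c := by
    rw [hc]
    have : max (mgf2 p1 U1 θ1 θ2) (max (mgf2 p2 U2 θ1 θ2) (mgf2 pE UE θ1 θ2)) < 1 :=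
      max_lt hγ1 (max_lt hγ2 hγE)
    linarith
  have hinv : 0 < c⁻¹ := inv_pos.mpr hcpos
  have hγ0 : 1 ≤ mgf2 p0 U0 θ1 θ2 := by
    rw [← h0sum, mgf2]
    apply Finset.sum_le_sum
    intro m hm
    simp only [U0, Finset.mem_product, Finset.mem_insert, Finset.mem_singleton] at hm
    have h1 : (0:ℝ) ≤ (m.1 : ℝ) := by rcases hm.1 with h|h <;> simp [h]
    have h2 : (0:ℝ) ≤ (m.2 : ℝ) := by rcases hm.2 with h|h <;> simp [h]
    have : (1:ℝ) ≤ Real.exp (θ1 * (m.1 : ℝ) + θ2 * (m.2 : ℝ)) :=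
      Real.one_le_exp (by positivity)
    nlinarith [h0nn m]
  have hbpos : 0 < b := by
    rw [hb]
    nlinarith
  have hsum : ∀ (p : ℤ × ℤ → ℝ) (U : Finset (ℤ × ℤ)) (n : ℤ × ℤ),
      ∑ m ∈ U, p m * v (n + m) = mgf2 p U θ1 θ2 * v n := by
    intro p U n
    simp only [mgf2, Finset.sum_mul, hv, Prod.fst_add, Prod.snd_add]
    apply Finset.sum_congr rfl
    intro m _
    push_cast
    rw [show θ1 * ((n.1:ℝ) + m.1) + θ2 * ((n.2:ℝ) + m.2)
        = (θ1 * (m.1:ℝ) + θ2 * (m.2:ℝ)) + (θ1 * (n.1:ℝ) + θ2 * (n.2:ℝ)) from by ring,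
      Real.exp_add]
    ring
  have hvnn : ∀ n : ℤ × ℤ, 0 ≤ v n := by
    intro n; rw [hv]; positivity
  refine ⟨hbpos, fun n hn1 hn2 => ?_⟩
  split_ifs with h1 h2 h3
  · subst h1
    rw [hsum, hv, hb]
    apply le_of_eq
    simp only [Prod.fst_zero, Prod.snd_zero]
    norm_num
    field_simp
    ring
  · rw [hsum]
    have hle : mgf2 p1 U1 θ1 θ2 - 1 ≤ -c := by
      rw [hc]
      have := le_max_left (mgf2 p1 U1 θ1 θ2) (max (mgf2 p2 U2 θ1 θ2) (mgf2 pE UE θ1 θ2))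
      linarith
    have := mul_le_mul_of_nonneg_right hle (hvnn n)
    nlinarith
  · rw [hsum]
    have hle : mgf2 p2 U2 θ1 θ2 - 1 ≤ -c := by
      rw [hc]
      have : mgf2 p2 U2 θ1 θ2 ≤ max (mgf2 p1 U1 θ1 θ2) (max (mgf2 p2 U2 θ1 θ2) (mgf2 pE UE θ1 θ2)) := le_max_of_le_right (le_max_left _ _)
      linarith
    have := mul_le_mul_of_nonneg_right hle (hvnn n)
    nlinarith
  · rw [hsum]
    have hle : mgf2 pE UE θ1 θ2 - 1 ≤ -c := by
      rw [hc]
      have : mgf2 pE UE θ1 θ2 ≤ max (mgf2 p1 U1 θ1 θ2) (max (mgf2 p2 U2 θ1 θ2) (mgf2 pE UE θ1 θ2)) := le_max_of_le_right (le_max_right _ _)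
      linarith
    have := mul_le_mul_of_nonneg_right hle (hvnn n)
    nlinarith
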